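/- A context x ∈ ℝ^d cannot be ε-strongly attacked into pulling a* if and only if there exists an arm a ≠ a* such that both of the following hold: (i) X_{a*} x = 0 and X_a x = 0, and (ii) α_{a*}‖x‖_{V_{a*}⁻¹} < ε + α_a‖x‖_{V_a⁻¹}. -/

import Mathlib

open Matrix

/-- The regularized Gram matrix `V = XᵀX + λI`. -/
noncomputable def Vmat {m d : ℕ} (lam : ℝ) (X : Matrix (Fin m) (Fin d) ℝ) :
    Matrix (Fin d) (Fin d) ℝ :=
  Xᵀ * X + lam • (1 : Matrix (Fin d) (Fin d) ℝ)

/-- The Mahalanobis norm `‖x‖_{V⁻¹} = √(xᵀ V⁻¹ x)`. -/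
noncomputable def mahNorm {d : ℕ} (V : Matrix (Fin d) (Fin d) ℝ) (x : Fin d → ℝ) : ℝ :=
  Real.sqrt (x ⬝ᵥ (V⁻¹ *ᵥ x))

/-- The post-attack ridge regression estimate `θ̂ = V⁻¹ Xᵀ (y + Δ)`. -/
noncomputable def thetaHat {m d : ℕ} (lam : ℝ) (X : Matrix (Fin m) (Fin d) ℝ)
    (y Δ : Fin m → ℝ) : Fin d → ℝ :=
  (Vmat lam X)⁻¹ *ᵥ (Xᵀ *ᵥ (y + Δ))

/-- The post-attack UCB index of arm `a` at context `x`: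
`xᵀ θ̂_a(Δ_a) + α_a ‖x‖_{V_a⁻¹}`. -/
noncomputable def ucbIndex {K d : ℕ} (lam : ℝ) (m : Fin K → ℕ)
    (X : ∀ a, Matrix (Fin (m a)) (Fin d) ℝ) (y : ∀ a, Fin (m a) → ℝ)
    (α : Fin K → ℝ) (Δ : ∀ a, Fin (m a) → ℝ) (x : Fin d → ℝ) (a : Fin K) : ℝ :=
  x ⬝ᵥ thetaHat lam (X a) (y a) (Δ a) + α a * mahNorm (Vmat lam (X a)) x

/-- The perturbation family `Δ` ε-strongly attacks context `x` into pulling arm `astar`. -/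
def StronglyAttacks {K d : ℕ} (lam : ℝ) (m : Fin K → ℕ)
    (X : ∀ a, Matrix (Fin (m a)) (Fin d) ℝ) (y : ∀ a, Fin (m a) → ℝ)
    (α : Fin K → ℝ) (astar : Fin K) (ε : ℝ)
    (Δ : ∀ a, Fin (m a) → ℝ) (x : Fin d → ℝ) : Prop :=
  ∀ a : Fin K, a ≠ astar →
    ucbIndex lam m X y α Δ x astar ≥ ε + ucbIndex lam m X y α Δ x a

/-- The perturbation family `Δ` weakly attacks context `x` into pulling arm `astar`. -/
def WeaklyAttacks {K d : ℕ} (lam : ℝ) (m : Fin K → ℕ)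
    (X : ∀ a, Matrix (Fin (m a)) (Fin d) ℝ) (y : ∀ a, Fin (m a) → ℝ)
    (α : Fin K → ℝ) (astar : Fin K)
    (Δ : ∀ a, Fin (m a) → ℝ) (x : Fin d → ℝ) : Prop :=
  ∀ a : Fin K, a ≠ astar →
    ucbIndex lam m X y α Δ x astar > ucbIndex lam m X y α Δ x a

lemma Vmat_posDef {mm d : ℕ} {lam : ℝ} (hlam : 0 < lam) (X : Matrix (Fin mm) (Fin d) ℝ) :
    (Vmat lam X).PosDef := by
  have h1 : (Xᵀ * X).PosSemidef := by
    have := Matrix.posSemidef_conjTranspose_mul_self X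
    simpa [Matrix.conjTranspose_eq_transpose_of_trivial] using this
  have h2 : (lam • (1 : Matrix (Fin d) (Fin d) ℝ)).PosDef := by
    rw [Matrix.posDef_iff_dotProduct_mulVec]
    constructor
    · unfold Matrix.IsHermitian
      simp
    · intro z hz
      have hzz : 0 < z ⬝ᵥ z := by
        have hnn : 0 ≤ z ⬝ᵥ z :=
          Finset.sum_nonneg fun i _ => mul_self_nonneg (z i)
        rcases lt_or_eq_of_le hnn with h | h
        · exact h
        · exact absurd (dotProduct_self_eq_zero.mp h.symm) hz
      simp only [Matrix.smul_mulVec, Matrix.one_mulVec, dotProduct_smul,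
        star_trivial, smul_eq_mul]
      exact mul_pos hlam hzz
  exact Matrix.PosDef.posSemidef_add h1 h2

lemma Vmat_isUnit_det {mm d : ℕ} {lam : ℝ} (hlam : 0 < lam) (X : Matrix (Fin mm) (Fin d) ℝ) :
    IsUnit (Vmat lam X).det :=
  (Vmat_posDef hlam X).det_pos.ne'.isUnit

lemma Vmat_inv_transpose {mm d : ℕ} (lam : ℝ) (X : Matrix (Fin mm) (Fin d) ℝ) :
    ((Vmat lam X)⁻¹)ᵀ = (Vmat lam X)⁻¹ := by
  have hsym : (Vmat lam X)ᵀ = Vmat lam X := by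
    unfold Vmat
    simp [Matrix.transpose_add, Matrix.transpose_mul, Matrix.transpose_smul]
  rw [Matrix.transpose_nonsing_inv, hsym]

lemma dot_thetaHat {mm d : ℕ} (lam : ℝ) (X : Matrix (Fin mm) (Fin d) ℝ)
    (y Δ : Fin mm → ℝ) (x : Fin d → ℝ) :
    x ⬝ᵥ thetaHat lam X y Δ = (X *ᵥ ((Vmat lam X)⁻¹ *ᵥ x)) ⬝ᵥ (y + Δ) := by
  unfold thetaHat
  rw [Matrix.dotProduct_mulVec, ← Vmat_inv_transpose lam X, Matrix.vecMul_transpose,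
    Matrix.dotProduct_mulVec, ← Matrix.mulVec_transpose, Matrix.transpose_transpose]
  rw [Vmat_inv_transpose]

lemma null_iff {mm d : ℕ} {lam : ℝ} (hlam : 0 < lam) (X : Matrix (Fin mm) (Fin d) ℝ)
    (x : Fin d → ℝ) :
    X *ᵥ ((Vmat lam X)⁻¹ *ᵥ x) = 0 ↔ X *ᵥ x = 0 := by
  have hdet := Vmat_isUnit_det hlam X
  have hVmul : ∀ v : Fin d → ℝ, Vmat lam X *ᵥ v = Xᵀ *ᵥ (X *ᵥ v) + lam • v := by
    intro v
    unfold Vmat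
    rw [Matrix.add_mulVec, Matrix.smul_mulVec, Matrix.one_mulVec, Matrix.mulVec_mulVec]
  constructor
  · intro h
    have hx : Vmat lam X *ᵥ ((Vmat lam X)⁻¹ *ᵥ x) = x := by
      rw [Matrix.mulVec_mulVec, Matrix.mul_nonsing_inv _ hdet, Matrix.one_mulVec]
    have hx2 : x = lam • ((Vmat lam X)⁻¹ *ᵥ x) := by
      conv_lhs => rw [← hx]
      rw [hVmul, h]
      simp
    have h3 : X *ᵥ x = X *ᵥ (lam • ((Vmat lam X)⁻¹ *ᵥ x)) := by rw [← hx2]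
    rw [h3, Matrix.mulVec_smul, h, smul_zero]
  · intro h
    have hVx : Vmat lam X *ᵥ (lam⁻¹ • x) = x := by
      rw [Matrix.mulVec_smul, hVmul, h]
      simp [smul_smul, inv_mul_cancel₀ hlam.ne']
    have hinv : (Vmat lam X)⁻¹ *ᵥ x = lam⁻¹ • x := by
      conv_lhs => rw [← hVx]
      rw [Matrix.mulVec_mulVec, Matrix.nonsing_inv_mul _ hdet, Matrix.one_mulVec]
    rw [hinv, Matrix.mulVec_smul, h, smul_zero]

lemma attain {mm : ℕ} {c : Fin mm → ℝ} (hc : c ≠ 0) (y : Fin mm → ℝ) (T : ℝ) :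
    ∃ Δ : Fin mm → ℝ, c ⬝ᵥ (y + Δ) = T := by
  have hcc : c ⬝ᵥ c ≠ 0 := fun h => hc (dotProduct_self_eq_zero.mp h)
  refine ⟨((T - c ⬝ᵥ y) / (c ⬝ᵥ c)) • c, ?_⟩
  rw [dotProduct_add, dotProduct_smul, smul_eq_mul]
  field_simp
  ring

lemma key_attain {mm d : ℕ} {lam : ℝ} (hlam : 0 < lam) (X : Matrix (Fin mm) (Fin d) ℝ)
    (y : Fin mm → ℝ) (x : Fin d → ℝ) (T : ℝ) :
    ∃ Δa : Fin mm → ℝ,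
      (X *ᵥ ((Vmat lam X)⁻¹ *ᵥ x)) ⬝ᵥ (y + Δa) = if X *ᵥ x = 0 then 0 else T := by
  by_cases h : X *ᵥ x = 0
  · exact ⟨0, by rw [(null_iff hlam X x).mpr h, zero_dotProduct, if_pos h]⟩
  · obtain ⟨Δa, hΔa⟩ := attain (fun hc => h ((null_iff hlam X x).mp hc)) y T
    exact ⟨Δa, by rw [hΔa, if_neg h]⟩

/-- Theorem 1 of the paper: a context `x` cannot be ε-strongly attacked into pulling
`astar` iff there is a non-target arm `a` with (i) `x ∈ Null(X_{a*}) ∩ Null(X_a)` and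
(ii) `α_{a*}‖x‖_{V_{a*}⁻¹} < ε + α_a‖x‖_{V_a⁻¹}`. -/
theorem cannot_strongly_attack_iff {K d : ℕ} (hK : 2 ≤ K) (hd : 1 ≤ d)
    (lam : ℝ) (hlam : 0 < lam) (m : Fin K → ℕ)
    (X : ∀ a, Matrix (Fin (m a)) (Fin d) ℝ) (y : ∀ a, Fin (m a) → ℝ)
    (α : Fin K → ℝ) (astar : Fin K) (ε : ℝ) (hε : 0 < ε) (x : Fin d → ℝ) :
    (¬ ∃ Δ : ∀ a, Fin (m a) → ℝ, StronglyAttacks lam m X y α astar ε Δ x) ↔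
      ∃ a : Fin K, a ≠ astar ∧ X astar *ᵥ x = 0 ∧ X a *ᵥ x = 0 ∧
        α astar * mahNorm (Vmat lam (X astar)) x
          < ε + α a * mahNorm (Vmat lam (X a)) x := by
  classical
  haveI : Nonempty (Fin K) := ⟨⟨0, by omega⟩⟩
  have hucb : ∀ (Δ : ∀ a, Fin (m a) → ℝ) (a : Fin K),
      ucbIndex lam m X y α Δ x a =
        (X a *ᵥ ((Vmat lam (X a))⁻¹ *ᵥ x)) ⬝ᵥ (y a + Δ a)
          + α a * mahNorm (Vmat lam (X a)) x := by
    intro Δ a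
    unfold ucbIndex
    rw [dot_thetaHat]
  constructor
  · intro hne
    by_contra hno
    push_neg at hno
    apply hne
    by_cases h0 : X astar *ᵥ x = 0
    · -- target arm is in the null space: push every non-null arm's index down
      choose Δ2 hΔ2 using fun a : Fin K =>
        key_attain hlam (X a) (y a) x
          (α astar * mahNorm (Vmat lam (X astar)) x - ε - α a * mahNorm (Vmat lam (X a)) x)
      refine ⟨Δ2, ?_⟩
      intro a ha
      rw [ge_iff_le, hucb, hucb, hΔ2 astar, hΔ2 a, if_pos h0]
      by_cases hXa : X a *ᵥ x = 0
      · rw [if_pos hXa]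
        have := hno a ha h0 hXa
        linarith
      · rw [if_neg hXa]
        linarith
    · -- target arm not in null space: push its own index up
      have hcs : X astar *ᵥ ((Vmat lam (X astar))⁻¹ *ᵥ x) ≠ 0 :=
        fun hc => h0 ((null_iff hlam (X astar) x).mp hc)
      set T : ℝ := Finset.univ.sup' Finset.univ_nonempty
        (fun a : Fin K => ε + ((X a *ᵥ ((Vmat lam (X a))⁻¹ *ᵥ x)) ⬝ᵥ y a
          + α a * mahNorm (Vmat lam (X a)) x)) with hT
      obtain ⟨Δs, hΔs⟩ := attain hcs (y astar)
        (T - α astar * mahNorm (Vmat lam (X astar)) x)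
      refine ⟨Function.update (fun a => (0 : Fin (m a) → ℝ)) astar Δs, ?_⟩
      intro a ha
      rw [ge_iff_le, hucb, hucb, Function.update_self, Function.update_of_ne ha,
        add_zero, hΔs]
      have hle : ε + ((X a *ᵥ ((Vmat lam (X a))⁻¹ *ᵥ x)) ⬝ᵥ y a
          + α a * mahNorm (Vmat lam (X a)) x) ≤ T := by
        rw [hT]
        exact Finset.le_sup' (fun a : Fin K => ε + ((X a *ᵥ ((Vmat lam (X a))⁻¹ *ᵥ x)) ⬝ᵥ y a
          + α a * mahNorm (Vmat lam (X a)) x)) (Finset.mem_univ a)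
      linarith
  · rintro ⟨a, hane, hXs, hXa, hlt⟩ ⟨Δ, hΔ⟩
    have h := hΔ a hane
    rw [ge_iff_le, hucb, hucb, (null_iff hlam (X astar) x).mpr hXs,
      (null_iff hlam (X a) x).mpr hXa, zero_dotProduct,
      zero_dotProduct] at h
    linarith
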